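/- arXiv:math/0209329 — 2 statements merged into one kernel-verified Lean document; each statement's English description precedes it below -/
import Mathlib

section
/- Let dμ be a measure on ℝ with compact infinite support and Jacobi coefficients a_n, b_n, let x₀ ∉ supp(dμ), d = dist(x₀, supp dμ) > 0, and suppose a_∞ = sup_n a_n < ∞. With δ_∞ = d²/(d + √2·a_∞), there do not exist two consecutive indices j, j+1 such that both p_j and p_{j+1} have a zero in (x₀ − δ_∞, x₀ + δ_∞). -/
open MeasureTheory Polynomial Finset

def measSupport (μ : Measure ℝ) : Set ℝ :=
  {x | ∀ ε > 0, 0 < μ (Metric.ball x ε)}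

/- ## Auxiliary lemmas -/

lemma aux_ae_mem (μ : Measure ℝ) : ∀ᵐ x ∂μ, x ∈ measSupport μ := by
  have hnull : μ ((measSupport μ)ᶜ) = 0 := by
    have hball : ∀ x : ((measSupport μ)ᶜ : Set ℝ), ∃ ε > (0:ℝ), μ (Metric.ball (x:ℝ) ε) = 0 := by
      rintro ⟨x, hx⟩
      simp only [measSupport, Set.mem_compl_iff, Set.mem_setOf_eq, not_forall] at hx
      obtain ⟨ε, hε, h⟩ := hx
      exact ⟨ε, hε, by simpa using h⟩
    choose ε hε h0 using hball
    obtain ⟨T, hTc, hTeq⟩ := TopologicalSpace.isOpen_iUnion_countable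
      (fun x : ((measSupport μ)ᶜ : Set ℝ) => Metric.ball (x:ℝ) (ε x)) (fun _ => Metric.isOpen_ball)
    have hcover : (measSupport μ)ᶜ ⊆ ⋃ x : ((measSupport μ)ᶜ : Set ℝ), Metric.ball (x:ℝ) (ε x) :=
      fun y hy => Set.mem_iUnion.2 ⟨⟨y, hy⟩, Metric.mem_ball_self (hε ⟨y, hy⟩)⟩
    have h1 : μ (⋃ x ∈ T, Metric.ball (x:ℝ) (ε x)) = 0 :=
      (measure_biUnion_null_iff hTc).2 fun x _ => h0 x
    refine le_antisymm ?_ zero_le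
    calc μ ((measSupport μ)ᶜ) ≤ μ (⋃ x : ((measSupport μ)ᶜ : Set ℝ), Metric.ball (x:ℝ) (ε x)) :=
          measure_mono hcover
      _ = 0 := by rw [← hTeq]; exact h1
  exact ae_iff.mpr hnull

lemma polyInt (μ : Measure ℝ) (hmom : ∀ n : ℕ, Integrable (fun x : ℝ => |x| ^ n) μ)
    (q : Polynomial ℝ) : Integrable (fun x => q.eval x) μ := by
  have hxi : ∀ i : ℕ, Integrable (fun x : ℝ => x ^ i) μ := by
    intro i
    refine (hmom i).mono' ((continuous_pow i).aestronglyMeasurable) ?_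
    exact ae_of_all _ fun x => by rw [Real.norm_eq_abs, abs_pow]
  have : (fun x => q.eval x) = fun x => ∑ i ∈ range (q.natDegree + 1), q.coeff i * x ^ i := by
    funext x; rw [Polynomial.eval_eq_sum_range]
  rw [this]
  exact integrable_finset_sum _ fun i _ => (hxi i).const_mul _

lemma cd_formula (p : ℕ → Polynomial ℝ) (a b : ℕ → ℝ)
    (hrec : ∀ k (x : ℝ), x * (p k).eval x
      = a (k + 1) * (p (k + 1)).eval x + b (k + 1) * (p k).eval x
        + (if k = 0 then 0 else a k * (p (k - 1)).eval x)) :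
    ∀ (m : ℕ) (x y : ℝ), (x - y) * ∑ k ∈ range (m+1), (p k).eval y * (p k).eval x
      = a (m+1) * ((p (m+1)).eval x * (p m).eval y - (p m).eval x * (p (m+1)).eval y) := by
  intro m
  induction m with
  | zero =>
    intro x y
    have hx := hrec 0 x
    have hy := hrec 0 y
    simp only [if_true] at hx hy
    rw [Finset.sum_range_one]
    linear_combination (p 0).eval y * hx - (p 0).eval x * hy
  | succ k ih =>
    intro x y
    have hx := hrec (k+1) x
    have hy := hrec (k+1) y
    simp only [Nat.succ_ne_zero, if_false, Nat.add_sub_cancel] at hx hy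
    rw [Finset.sum_range_succ]
    linear_combination ih x y + (p (k+1)).eval y * hx - (p (k+1)).eval x * hy

lemma masterInt (μ : Measure ℝ) (p : ℕ → Polynomial ℝ)
    (hPInt : ∀ k l, Integrable (fun x => (p k).eval x * (p l).eval x) μ)
    (N : ℕ) (c e : ℕ → ℝ) :
    Integrable (fun x => (∑ k ∈ range N, c k * (p k).eval x) * (∑ l ∈ range N, e l * (p l).eval x)) μ := by
  have hpt : (fun x => (∑ k ∈ range N, c k * (p k).eval x) * (∑ l ∈ range N, e l * (p l).eval x))
      = fun x => ∑ k ∈ range N, ∑ l ∈ range N, (c k * e l) * ((p k).eval x * (p l).eval x) := by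
    funext x
    rw [Finset.sum_mul_sum]
    exact Finset.sum_congr rfl fun k _ => Finset.sum_congr rfl fun l _ => by ring
  rw [hpt]
  exact integrable_finset_sum _ fun k _ => integrable_finset_sum _ fun l _ => (hPInt k l).const_mul _

lemma master (μ : Measure ℝ) (p : ℕ → Polynomial ℝ)
    (hPInt : ∀ k l, Integrable (fun x => (p k).eval x * (p l).eval x) μ)
    (horth : ∀ k l, ∫ x, (p k).eval x * (p l).eval x ∂μ = if k = l then 1 else 0)
    (N : ℕ) (c e : ℕ → ℝ) :
    ∫ x, (∑ k ∈ range N, c k * (p k).eval x) * (∑ l ∈ range N, e l * (p l).eval x) ∂μ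
      = ∑ k ∈ range N, c k * e k := by
  have hpt : ∀ x : ℝ, (∑ k ∈ range N, c k * (p k).eval x) * (∑ l ∈ range N, e l * (p l).eval x)
      = ∑ k ∈ range N, ∑ l ∈ range N, (c k * e l) * ((p k).eval x * (p l).eval x) := by
    intro x
    rw [Finset.sum_mul_sum]
    exact Finset.sum_congr rfl fun k _ => Finset.sum_congr rfl fun l _ => by ring
  simp only [hpt]
  rw [integral_finset_sum _ (fun k _ => integrable_finset_sum _ fun l _ => (hPInt k l).const_mul _)]
  have hin : ∀ k ∈ range N, (∫ x, ∑ l ∈ range N, (c k * e l) * ((p k).eval x * (p l).eval x) ∂μ)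
      = c k * e k := by
    intro k hk
    rw [integral_finset_sum _ (fun l _ => (hPInt k l).const_mul _)]
    have : ∀ l ∈ range N, (∫ x, (c k * e l) * ((p k).eval x * (p l).eval x) ∂μ)
        = if k = l then c k * e l else 0 := by
      intro l _
      rw [integral_const_mul, horth k l]
      simp only [mul_ite, mul_one, mul_zero]
    rw [Finset.sum_congr rfl this, Finset.sum_ite_eq (range N) k (fun l => c k * e l)]
    simp [Finset.mem_range.1 hk]
  rw [Finset.sum_congr rfl hin]

/- ## coefficient vectors -/

def vecA (p : ℕ → Polynomial ℝ) (n : ℕ) (x₁ : ℝ) : ℕ → ℝ :=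
  fun k => if k < n then (p k).eval x₁ else 0

def vecE (n : ℕ) : ℕ → ℝ := fun k => if k = n then 1 else 0

lemma vecA_lt (p : ℕ → Polynomial ℝ) (n : ℕ) (x₁ : ℝ) {k : ℕ} (h : k < n) :
    vecA p n x₁ k = (p k).eval x₁ := if_pos h

lemma vecA_ge (p : ℕ → Polynomial ℝ) (n : ℕ) (x₁ : ℝ) {k : ℕ} (h : ¬ k < n) :
    vecA p n x₁ k = 0 := if_neg h

lemma sum_swap_mul (N : ℕ) (u v : ℕ → ℝ) :
    ∑ k ∈ range N, u k * v k = ∑ k ∈ range N, v k * u k :=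
  Finset.sum_congr rfl fun k _ => mul_comm _ _

lemma vecA_mul_sum (p : ℕ → Polynomial ℝ) (x₁ : ℝ) (n N : ℕ) (h : n ≤ N) (c : ℕ → ℝ) :
    ∑ k ∈ range N, vecA p n x₁ k * c k = ∑ k ∈ range n, (p k).eval x₁ * c k := by
  rw [← Finset.sum_subset (Finset.range_subset_range.2 h)
    (fun k _ hk => by rw [vecA_ge p n x₁ (by simpa using hk), zero_mul])]
  exact Finset.sum_congr rfl fun k hk => by rw [vecA_lt p n x₁ (Finset.mem_range.1 hk)]

lemma vecA_mul_vecA (p : ℕ → Polynomial ℝ) (x₁ x₂ : ℝ) (n n' N : ℕ) (h : n ≤ N) (h' : n ≤ n') :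
    ∑ k ∈ range N, vecA p n x₁ k * vecA p n' x₂ k
      = ∑ k ∈ range n, (p k).eval x₁ * (p k).eval x₂ := by
  rw [vecA_mul_sum p x₁ n N h]
  exact Finset.sum_congr rfl fun k hk =>
    by rw [vecA_lt p n' x₂ (lt_of_lt_of_le (Finset.mem_range.1 hk) h')]

lemma sum_mul_vecE (c : ℕ → ℝ) {n N : ℕ} (h : n < N) :
    ∑ k ∈ range N, c k * vecE n k = c n := by
  have h1 : ∀ k ∈ range N, c k * vecE n k = if k = n then c k else 0 := by
    intro k _
    by_cases hk : k = n <;> simp [vecE, hk]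
  rw [Finset.sum_congr rfl h1, Finset.sum_ite_eq' (range N) n c, if_pos (Finset.mem_range.2 h)]

lemma vecE_mul_sum (c : ℕ → ℝ) {n N : ℕ} (h : n < N) :
    ∑ k ∈ range N, vecE n k * c k = c n := by
  rw [sum_swap_mul]; exact sum_mul_vecE c h

lemma sum_combo2 (N : ℕ) (α β : ℝ) (u v w : ℕ → ℝ) :
    ∑ k ∈ range N, (α * u k + β * v k) * w k
      = α * (∑ k ∈ range N, u k * w k) + β * (∑ k ∈ range N, v k * w k) := by
  rw [Finset.mul_sum, Finset.mul_sum, ← Finset.sum_add_distrib]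
  exact Finset.sum_congr rfl fun k _ => by ring

lemma sum_combo2R (N : ℕ) (α β : ℝ) (u v w : ℕ → ℝ) :
    ∑ k ∈ range N, w k * (α * u k + β * v k)
      = α * (∑ k ∈ range N, w k * u k) + β * (∑ k ∈ range N, w k * v k) := by
  rw [Finset.mul_sum, Finset.mul_sum, ← Finset.sum_add_distrib]
  exact Finset.sum_congr rfl fun k _ => by ring

lemma sum_combo4 (N : ℕ) (α₁ α₂ α₃ α₄ : ℝ) (u₁ u₂ u₃ u₄ w : ℕ → ℝ) :
    ∑ k ∈ range N, (α₁ * u₁ k + α₂ * u₂ k + α₃ * u₃ k + α₄ * u₄ k) * w k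
      = α₁ * (∑ k ∈ range N, u₁ k * w k) + α₂ * (∑ k ∈ range N, u₂ k * w k)
        + α₃ * (∑ k ∈ range N, u₃ k * w k) + α₄ * (∑ k ∈ range N, u₄ k * w k) := by
  rw [Finset.mul_sum, Finset.mul_sum, Finset.mul_sum, Finset.mul_sum,
    ← Finset.sum_add_distrib, ← Finset.sum_add_distrib, ← Finset.sum_add_distrib]
  exact Finset.sum_congr rfl fun k _ => by ring

lemma sum_combo4R (N : ℕ) (α₁ α₂ α₃ α₄ : ℝ) (u₁ u₂ u₃ u₄ w : ℕ → ℝ) :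
    ∑ k ∈ range N, w k * (α₁ * u₁ k + α₂ * u₂ k + α₃ * u₃ k + α₄ * u₄ k)
      = α₁ * (∑ k ∈ range N, w k * u₁ k) + α₂ * (∑ k ∈ range N, w k * u₂ k)
        + α₃ * (∑ k ∈ range N, w k * u₃ k) + α₄ * (∑ k ∈ range N, w k * u₄ k) := by
  rw [Finset.mul_sum, Finset.mul_sum, Finset.mul_sum, Finset.mul_sum,
    ← Finset.sum_add_distrib, ← Finset.sum_add_distrib, ← Finset.sum_add_distrib]
  exact Finset.sum_congr rfl fun k _ => by ring

lemma sum_sq_combo4 (N : ℕ) (α₁ α₂ α₃ α₄ : ℝ) (u₁ u₂ u₃ u₄ : ℕ → ℝ) :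
    ∑ k ∈ range N, (α₁ * u₁ k + α₂ * u₂ k + α₃ * u₃ k + α₄ * u₄ k)
        * (α₁ * u₁ k + α₂ * u₂ k + α₃ * u₃ k + α₄ * u₄ k)
      = α₁ ^ 2 * (∑ k ∈ range N, u₁ k * u₁ k) + α₂ ^ 2 * (∑ k ∈ range N, u₂ k * u₂ k)
        + α₃ ^ 2 * (∑ k ∈ range N, u₃ k * u₃ k) + α₄ ^ 2 * (∑ k ∈ range N, u₄ k * u₄ k)
        + 2 * α₁ * α₂ * (∑ k ∈ range N, u₁ k * u₂ k)
        + 2 * α₁ * α₃ * (∑ k ∈ range N, u₁ k * u₃ k)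
        + 2 * α₁ * α₄ * (∑ k ∈ range N, u₁ k * u₄ k)
        + 2 * α₂ * α₃ * (∑ k ∈ range N, u₂ k * u₃ k)
        + 2 * α₂ * α₄ * (∑ k ∈ range N, u₂ k * u₄ k)
        + 2 * α₃ * α₄ * (∑ k ∈ range N, u₃ k * u₄ k) := by
  have h : ∀ k ∈ range N, (α₁ * u₁ k + α₂ * u₂ k + α₃ * u₃ k + α₄ * u₄ k)
        * (α₁ * u₁ k + α₂ * u₂ k + α₃ * u₃ k + α₄ * u₄ k)
      = α₁ ^ 2 * (u₁ k * u₁ k) + α₂ ^ 2 * (u₂ k * u₂ k)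
        + α₃ ^ 2 * (u₃ k * u₃ k) + α₄ ^ 2 * (u₄ k * u₄ k)
        + 2 * α₁ * α₂ * (u₁ k * u₂ k) + 2 * α₁ * α₃ * (u₁ k * u₃ k)
        + 2 * α₁ * α₄ * (u₁ k * u₄ k) + 2 * α₂ * α₃ * (u₂ k * u₃ k)
        + 2 * α₂ * α₄ * (u₂ k * u₄ k) + 2 * α₃ * α₄ * (u₃ k * u₄ k) := fun k _ => by ring
  rw [Finset.sum_congr rfl h]
  simp only [Finset.sum_add_distrib, ← Finset.mul_sum]

/- ## final real-variable contradiction -/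

lemma fa_amgm (u v x y : ℝ) : 4 * (u * v) * (x * y) ≤ (v * x + u * y) ^ 2 := by
  nlinarith [sq_nonneg (v * x - u * y)]

lemma fa_cube_lt (x y : ℝ) (hx : 0 < x) (h : x < y) : x ^ 3 < y ^ 3 := by
  nlinarith [mul_pos hx hx, mul_pos hx (lt_trans hx h), mul_pos (lt_trans hx h) (lt_trans hx h)]

lemma fa_deltalt (dd δ c : ℝ) (hdd : 0 < dd) (hδpos : 0 < δ) (hc : 0 < c)
    (hδd : δ * (dd + c) = dd ^ 2) : δ < dd := by
  nlinarith [mul_pos hδpos hc]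

lemma fa_key (dd δ c : ℝ) (hdd : 0 < dd) (hδpos : 0 < δ) (hc : 0 < c)
    (hδd : δ * (dd + c) = dd ^ 2) : c * δ < dd ^ 2 - δ ^ 2 := by
  have h1 := fa_deltalt dd δ c hdd hδpos hc hδd
  nlinarith [mul_pos hδpos (sub_pos.2 h1)]

lemma fa_C2 (dd δ aInf : ℝ) (hdd : 0 < dd) (hδpos : 0 < δ) (haInfpos : 0 < aInf)
    (hδd : δ * (dd + Real.sqrt 2 * aInf) = dd ^ 2) :
    4 * δ ^ 2 * aInf ^ 2 < 2 * (dd ^ 2 - δ ^ 2) ^ 2 := by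
  have sqrt2pos : (0:ℝ) < Real.sqrt 2 := Real.sqrt_pos.2 (by norm_num)
  have h2s : Real.sqrt 2 ^ 2 = 2 := Real.sq_sqrt (by norm_num)
  have hc : 0 < Real.sqrt 2 * aInf := mul_pos sqrt2pos haInfpos
  have hkey := fa_key dd δ _ hdd hδpos hc hδd
  have hsq := mul_lt_mul'' hkey hkey (by positivity) (by positivity)
  nlinarith [hsq, h2s]

lemma fa_sq_lt (x y : ℝ) (hx : 0 < x) (h : x < y) : x ^ 2 < y ^ 2 := by nlinarith

lemma fa_two_pos (u v : ℝ) (hu : 0 ≤ u) (hv : 0 ≤ v) (h : 0 < u * v) : 0 < u ∧ 0 < v := by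
  constructor
  · rcases hu.lt_or_eq with h' | h'
    · exact h'
    · exfalso; rw [← h'] at h; simp at h
  · rcases hv.lt_or_eq with h' | h'
    · exact h'
    · exfalso; rw [← h'] at h; simp at h

lemma final_algebra (dd δ aInf Uq Vq tq r P s ε₁ ε₂ : ℝ)
    (hd : 0 < dd) (hδpos : 0 < δ)
    (hδd : δ * (dd + Real.sqrt 2 * aInf) = dd ^ 2) (haInfpos : 0 < aInf)
    (hε₁ : ε₁ ^ 2 < δ ^ 2) (hε₂ : ε₂ ^ 2 < δ ^ 2)
    (hUpos : 0 < Uq)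
    (hUm : r ^ 2 ≤ aInf ^ 2 * Uq)
    (hs2 : s ^ 2 ≤ aInf ^ 2 * P ^ 2)
    (hrne : r ≠ 0) (hPne : P ≠ 0)
    (hrPt : r * P = (ε₂ - ε₁) * tq)
    (hCS : tq ^ 2 ≤ Uq * Vq - Uq * P ^ 2)
    (hquad : ∀ α β : ℝ, dd ^ 2 * (α ^ 2 * Uq + 2 * α * β * tq + β ^ 2 * Vq)
      ≤ α ^ 2 * (ε₁ ^ 2 * Uq + r ^ 2) + β ^ 2 * (ε₂ ^ 2 * Vq + s ^ 2)
        + 2 * α * β * (ε₁ * ε₂ * tq + ε₂ * (r * P))) :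
    False := by
  have sqrt2pos : (0:ℝ) < Real.sqrt 2 := Real.sqrt_pos.2 (by norm_num)
  have hcpos : 0 < Real.sqrt 2 * aInf := mul_pos sqrt2pos haInfpos
  have hδltd : δ < dd := fa_deltalt _ _ _ hd hδpos hcpos hδd
  have hCpos : 0 < dd ^ 2 - δ ^ 2 := by
    have := fa_sq_lt δ dd hδpos hδltd; linarith
  have hC2 := fa_C2 dd δ aInf hd hδpos haInfpos hδd
  have hD1C : dd ^ 2 - δ ^ 2 < dd ^ 2 - ε₁ ^ 2 := by linarith
  have hD2C : dd ^ 2 - δ ^ 2 < dd ^ 2 - ε₂ ^ 2 := by linarith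
  have hD1pos : 0 < dd ^ 2 - ε₁ ^ 2 := lt_trans hCpos hD1C
  have hD2pos : 0 < dd ^ 2 - ε₂ ^ 2 := lt_trans hCpos hD2C
  have hΔ4 : (ε₂ - ε₁) ^ 2 < 4 * δ ^ 2 := by linarith [sq_nonneg (ε₁ + ε₂)]
  have hA1 : (dd ^ 2 - ε₁ ^ 2) * Uq ≤ r ^ 2 := by linarith [hquad 1 0]
  have hB1 : (dd ^ 2 - ε₂ ^ 2) * Vq ≤ s ^ 2 := by linarith [hquad 0 1]
  have hγ : ∀ γ : ℝ, 0 ≤ (r ^ 2 - (dd ^ 2 - ε₁ ^ 2) * Uq) * (γ * γ)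
      + (-(2 * tq * (dd ^ 2 - ε₂ ^ 2))) * γ + (s ^ 2 - (dd ^ 2 - ε₂ ^ 2) * Vq) := by
    intro γ
    have h := hquad γ 1
    have hsub : 2 * γ * 1 * (ε₁ * ε₂ * tq + ε₂ * (r * P))
        = 2 * γ * (ε₁ * ε₂ * tq + (ε₂ ^ 2 - ε₂ * ε₁) * tq) := by rw [hrPt]; ring
    linarith [h, hsub]
  have hABd : (tq * (dd ^ 2 - ε₂ ^ 2)) ^ 2
      ≤ (r ^ 2 - (dd ^ 2 - ε₁ ^ 2) * Uq) * (s ^ 2 - (dd ^ 2 - ε₂ ^ 2) * Vq) := by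
    have hD := discrim_le_zero hγ
    rw [discrim] at hD
    linarith [hD]
  have hW : 0 < P ^ 2 := lt_of_le_of_ne (sq_nonneg P) (Ne.symm (pow_ne_zero 2 hPne))
  have hr2 : 0 < r ^ 2 := lt_of_le_of_ne (sq_nonneg r) (Ne.symm (pow_ne_zero 2 hrne))
  have hxW : r ^ 2 * P ^ 2 = (ε₂ - ε₁) ^ 2 * tq ^ 2 := by
    linear_combination (r * P + (ε₂ - ε₁) * tq) * hrPt
  obtain ⟨hΔ2, hτ⟩ : 0 < (ε₂ - ε₁) ^ 2 ∧ 0 < tq ^ 2 :=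
    fa_two_pos _ _ (sq_nonneg _) (sq_nonneg _) (by rw [← hxW]; exact mul_pos hr2 hW)
  have hS2 : Uq * (s ^ 2 - (dd ^ 2 - ε₂ ^ 2) * Vq)
      ≤ (aInf ^ 2 - (dd ^ 2 - ε₂ ^ 2)) * (Uq * P ^ 2) - (dd ^ 2 - ε₂ ^ 2) * tq ^ 2 := by
    have h1 := mul_le_mul_of_nonneg_left hs2 hUpos.le
    have h2 := mul_le_mul_of_nonneg_left hCS hD2pos.le
    linarith [h1, h2]
  have hAAnn : 0 ≤ r ^ 2 - (dd ^ 2 - ε₁ ^ 2) * Uq := by linarith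
  have hS3 : tq ^ 2 * (dd ^ 2 - ε₂ ^ 2) ^ 2 * Uq
      ≤ (r ^ 2 - (dd ^ 2 - ε₁ ^ 2) * Uq)
        * ((aInf ^ 2 - (dd ^ 2 - ε₂ ^ 2)) * (Uq * P ^ 2) - (dd ^ 2 - ε₂ ^ 2) * tq ^ 2) := by
    have h1 := mul_le_mul_of_nonneg_right hABd hUpos.le
    have h2 := mul_le_mul_of_nonneg_left hS2 hAAnn
    linarith [h1, h2]
  have hpos3 : 0 < tq ^ 2 * (dd ^ 2 - ε₂ ^ 2) ^ 2 * Uq :=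
    mul_pos (mul_pos hτ (pow_pos hD2pos 2)) hUpos
  have hAApos : 0 < r ^ 2 - (dd ^ 2 - ε₁ ^ 2) * Uq := by
    rcases hAAnn.lt_or_eq with h | h
    · exact h
    · exfalso
      have h0 : (r ^ 2 - (dd ^ 2 - ε₁ ^ 2) * Uq)
          * ((aInf ^ 2 - (dd ^ 2 - ε₂ ^ 2)) * (Uq * P ^ 2) - (dd ^ 2 - ε₂ ^ 2) * tq ^ 2) = 0 := by
        rw [← h, zero_mul]
      linarith [hS3, hpos3]
  have hq'pos : 0 < (aInf ^ 2 - (dd ^ 2 - ε₂ ^ 2)) * (Uq * P ^ 2) - (dd ^ 2 - ε₂ ^ 2) * tq ^ 2 := by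
    by_contra hcon
    push_neg at hcon
    have h0 := mul_nonpos_of_nonneg_of_nonpos hAApos.le hcon
    linarith [hS3, hpos3]
  have hA' : (dd ^ 2 - ε₁ ^ 2) * (Uq * P ^ 2) < (ε₂ - ε₁) ^ 2 * tq ^ 2 := by
    have h1 := mul_pos hAApos hW
    linarith [h1, hxW]
  have hG : (dd ^ 2 - ε₁ ^ 2) * (dd ^ 2 - ε₂ ^ 2)
      < (aInf ^ 2 - (dd ^ 2 - ε₂ ^ 2)) * (ε₂ - ε₁) ^ 2 := by
    have hq'' : (dd ^ 2 - ε₂ ^ 2) * tq ^ 2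
        < (aInf ^ 2 - (dd ^ 2 - ε₂ ^ 2)) * (Uq * P ^ 2) := by linarith
    have h1 := mul_lt_mul'' hA' hq'' (by positivity) (by positivity)
    have h2 : (0:ℝ) < Uq * P ^ 2 * tq ^ 2 := mul_pos (mul_pos hUpos hW) hτ
    have h3 : (dd ^ 2 - ε₁ ^ 2) * (dd ^ 2 - ε₂ ^ 2) * (Uq * P ^ 2 * tq ^ 2)
        < (aInf ^ 2 - (dd ^ 2 - ε₂ ^ 2)) * (ε₂ - ε₁) ^ 2 * (Uq * P ^ 2 * tq ^ 2) := by
      linarith [h1]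
    exact lt_of_mul_lt_mul_right h3 h2.le
  -- AM-GM assembly
  have s8 : (dd ^ 2 - ε₂ ^ 2) * ((r ^ 2 - (dd ^ 2 - ε₁ ^ 2) * Uq) * P ^ 2)
      + (ε₂ - ε₁) ^ 2 * ((aInf ^ 2 - (dd ^ 2 - ε₂ ^ 2)) * (Uq * P ^ 2) - (dd ^ 2 - ε₂ ^ 2) * tq ^ 2)
      = (Uq * P ^ 2) * ((aInf ^ 2 - (dd ^ 2 - ε₂ ^ 2)) * (ε₂ - ε₁) ^ 2
          - (dd ^ 2 - ε₁ ^ 2) * (dd ^ 2 - ε₂ ^ 2)) := by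
    linear_combination (dd ^ 2 - ε₂ ^ 2) * hxW
  have s7 := fa_amgm ((ε₂ - ε₁) ^ 2) (dd ^ 2 - ε₂ ^ 2)
      ((r ^ 2 - (dd ^ 2 - ε₁ ^ 2) * Uq) * P ^ 2)
      ((aInf ^ 2 - (dd ^ 2 - ε₂ ^ 2)) * (Uq * P ^ 2) - (dd ^ 2 - ε₂ ^ 2) * tq ^ 2)
  rw [s8] at s7
  have s9 : 4 * ((ε₂ - ε₁) ^ 2 * (dd ^ 2 - ε₂ ^ 2)) * ((tq ^ 2 * (dd ^ 2 - ε₂ ^ 2) ^ 2 * Uq) * P ^ 2)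
      ≤ 4 * ((ε₂ - ε₁) ^ 2 * (dd ^ 2 - ε₂ ^ 2))
        * (((r ^ 2 - (dd ^ 2 - ε₁ ^ 2) * Uq) * P ^ 2)
          * ((aInf ^ 2 - (dd ^ 2 - ε₂ ^ 2)) * (Uq * P ^ 2) - (dd ^ 2 - ε₂ ^ 2) * tq ^ 2)) := by
    have h1 := mul_le_mul_of_nonneg_right hS3 hW.le
    have h2 : (0:ℝ) ≤ 4 * ((ε₂ - ε₁) ^ 2 * (dd ^ 2 - ε₂ ^ 2)) := by positivity
    have h3 := mul_le_mul_of_nonneg_left h1 h2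
    linarith [h3]
  have s12 : 4 * (dd ^ 2 - ε₁ ^ 2) * (dd ^ 2 - ε₂ ^ 2) ^ 3 * (Uq * P ^ 2) ^ 2
      < 4 * ((ε₂ - ε₁) ^ 2 * (dd ^ 2 - ε₂ ^ 2))
        * ((tq ^ 2 * (dd ^ 2 - ε₂ ^ 2) ^ 2 * Uq) * P ^ 2) := by
    have h1 : (0:ℝ) < 4 * (dd ^ 2 - ε₂ ^ 2) ^ 3 * (Uq * P ^ 2) := by positivity
    have h2 := mul_lt_mul_of_pos_left hA' h1
    linarith [h2]
  have s13 : 4 * (dd ^ 2 - ε₁ ^ 2) * (dd ^ 2 - ε₂ ^ 2) ^ 3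
      < ((aInf ^ 2 - (dd ^ 2 - ε₂ ^ 2)) * (ε₂ - ε₁) ^ 2
          - (dd ^ 2 - ε₁ ^ 2) * (dd ^ 2 - ε₂ ^ 2)) ^ 2 := by
    have h3 : 4 * (dd ^ 2 - ε₁ ^ 2) * (dd ^ 2 - ε₂ ^ 2) ^ 3 * (Uq * P ^ 2) ^ 2
        < ((aInf ^ 2 - (dd ^ 2 - ε₂ ^ 2)) * (ε₂ - ε₁) ^ 2
          - (dd ^ 2 - ε₁ ^ 2) * (dd ^ 2 - ε₂ ^ 2)) ^ 2 * (Uq * P ^ 2) ^ 2 := by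
      linarith [s12, s9, s7]
    have h4 : (0:ℝ) < (Uq * P ^ 2) ^ 2 := by positivity
    exact lt_of_mul_lt_mul_right h3 h4.le
  have hfin2 : 0 < (aInf ^ 2 - (dd ^ 2 - ε₂ ^ 2)) * (ε₂ - ε₁) ^ 2
      - (dd ^ 2 - ε₁ ^ 2) * (dd ^ 2 - ε₂ ^ 2) := by linarith
  have c3 := fa_cube_lt _ _ hCpos hD2C
  have hfin3 : 4 * (dd ^ 2 - δ ^ 2) ^ 4 < 4 * (dd ^ 2 - ε₁ ^ 2) * (dd ^ 2 - ε₂ ^ 2) ^ 3 := by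
    have h1 : (0:ℝ) < (dd ^ 2 - δ ^ 2) ^ 3 := by positivity
    have h2 := mul_lt_mul'' hD1C c3 hCpos.le h1.le
    linarith [h2]
  have hfin4 : (2 * (dd ^ 2 - δ ^ 2) ^ 2) ^ 2
      < ((aInf ^ 2 - (dd ^ 2 - ε₂ ^ 2)) * (ε₂ - ε₁) ^ 2
          - (dd ^ 2 - ε₁ ^ 2) * (dd ^ 2 - ε₂ ^ 2)) ^ 2 := by linarith [s13, hfin3]
  have hfin5 : 2 * (dd ^ 2 - δ ^ 2) ^ 2
      < (aInf ^ 2 - (dd ^ 2 - ε₂ ^ 2)) * (ε₂ - ε₁) ^ 2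
          - (dd ^ 2 - ε₁ ^ 2) * (dd ^ 2 - ε₂ ^ 2) :=
    lt_of_pow_lt_pow_left₀ 2 hfin2.le hfin4
  have hApos : 0 < aInf ^ 2 - (dd ^ 2 - ε₂ ^ 2) := by
    have h1 : 0 < (aInf ^ 2 - (dd ^ 2 - ε₂ ^ 2)) * (ε₂ - ε₁) ^ 2 :=
      lt_trans (mul_pos hD1pos hD2pos) hG
    by_contra hcon
    push_neg at hcon
    linarith [mul_nonpos_of_nonpos_of_nonneg hcon (sq_nonneg (ε₂ - ε₁)), h1]
  have hfin6 : (aInf ^ 2 - (dd ^ 2 - ε₂ ^ 2)) * (ε₂ - ε₁) ^ 2 < 4 * δ ^ 2 * aInf ^ 2 := by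
    have h1 := mul_lt_mul_of_pos_left hΔ4 hApos
    have h2 : aInf ^ 2 - (dd ^ 2 - ε₂ ^ 2) < aInf ^ 2 := by linarith
    have h3 : (0:ℝ) < 4 * δ ^ 2 := by positivity
    have h4 := mul_lt_mul_of_pos_right h2 h3
    linarith [h1, h4]
  linarith [hfin5, hfin6, hC2, mul_pos hD1pos hD2pos]

/-- Theorem 1, uniform version: with `a_∞ = sup_n a_n < ∞` and
`δ_∞ = d²/(d + √2 a_∞)`, no two consecutive `p_j`, `p_{j+1}` both have a zero in
`(x₀ − δ_∞, x₀ + δ_∞)`. -/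
theorem stmt_7 (μ : Measure ℝ)
    (hmom : ∀ n : ℕ, Integrable (fun x : ℝ => |x| ^ n) μ)
    (hcpt : IsCompact (measSupport μ))
    (hinf : (measSupport μ).Infinite)
    (p : ℕ → Polynomial ℝ) (a b : ℕ → ℝ)
    (ha : ∀ k, 0 < a k)
    (hdeg : ∀ k, (p k).natDegree = k)
    (hlead : ∀ k, 0 < (p k).leadingCoeff)
    (horth : ∀ k m, ∫ x, (p k).eval x * (p m).eval x ∂μ = if k = m then 1 else 0)
    (hrec : ∀ k x, x * (p k).eval x
      = a (k + 1) * (p (k + 1)).eval x + b (k + 1) * (p k).eval x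
        + (if k = 0 then 0 else a k * (p (k - 1)).eval x))
    (x₀ : ℝ) (hx₀ : x₀ ∉ measSupport μ)
    (d : ℝ) (hd : d = Metric.infDist x₀ (measSupport μ)) (hdpos : 0 < d)
    (aInf : ℝ) (hbdd : BddAbove (Set.range a)) (haInf : aInf = ⨆ k, a k)
    (δ : ℝ) (hδ : δ = d ^ 2 / (d + Real.sqrt 2 * aInf)) :
    ¬ ∃ j : ℕ, (∃ x ∈ Set.Ioo (x₀ - δ) (x₀ + δ), (p j).eval x = 0) ∧
      (∃ y ∈ Set.Ioo (x₀ - δ) (x₀ + δ), (p (j + 1)).eval y = 0) := by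
  have haInf_ge : ∀ k, a k ≤ aInf := fun k => haInf ▸ le_ciSup hbdd k
  have haInfpos : 0 < aInf := lt_of_lt_of_le (ha 0) (haInf_ge 0)
  have sqrt2pos : (0:ℝ) < Real.sqrt 2 := Real.sqrt_pos.2 (by norm_num)
  have hden : (0:ℝ) < d + Real.sqrt 2 * aInf := by positivity
  have hδd : δ * (d + Real.sqrt 2 * aInf) = d ^ 2 := by
    rw [hδ]; field_simp
  have hδpos : 0 < δ := by rw [hδ]; positivity
  have hp0eval : ∀ x : ℝ, (p 0).eval x = (p 0).leadingCoeff := by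
    intro x
    conv_lhs => rw [Polynomial.eq_C_of_natDegree_eq_zero (hdeg 0)]
    rw [Polynomial.eval_C, Polynomial.leadingCoeff, hdeg 0]
  have hp0ne : ∀ x : ℝ, (p 0).eval x ≠ 0 := fun x => by
    rw [hp0eval x]; exact ne_of_gt (hlead 0)
  have hnoshare : ∀ k (x : ℝ), (p k).eval x = 0 → (p (k+1)).eval x = 0 → False := by
    intro k
    induction k with
    | zero => intro x h0 _; exact hp0ne x h0
    | succ k ih =>
      intro x h1 h2
      have hz : a (k+1) * (p k).eval x = 0 := by
        have hr := hrec (k+1) x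
        rw [h1, h2] at hr
        simp only [mul_zero, zero_add, add_zero, Nat.succ_ne_zero, if_false,
          Nat.add_sub_cancel] at hr
        linarith [hr]
      have hpk : (p k).eval x = 0 := by
        rcases mul_eq_zero.1 hz with h | h
        · exact absurd h (ha (k+1)).ne'
        · exact h
      exact ih x hpk h1
  have hPInt : ∀ k l, Integrable (fun x => (p k).eval x * (p l).eval x) μ := by
    intro k l
    have h1 := polyInt μ hmom (p k * p l)
    simpa only [Polynomial.eval_mul] using h1
  have haeD : ∀ᵐ x ∂μ, d ^ 2 ≤ (x - x₀) ^ 2 := by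
    filter_upwards [aux_ae_mem μ] with x hx
    have h1 : d ≤ dist x₀ x := hd ▸ Metric.infDist_le_dist_of_mem hx
    rw [Real.dist_eq] at h1
    have h2 := mul_self_le_mul_self hdpos.le h1
    have h3 := abs_mul_abs_self (x₀ - x)
    nlinarith [h2, h3]
  rintro ⟨j, ⟨x₁, hx₁I, hpx₁⟩, ⟨x₂, hx₂I, hpx₂⟩⟩
  obtain ⟨hx₁l, hx₁r⟩ := hx₁I
  obtain ⟨hx₂l, hx₂r⟩ := hx₂I
  cases j with
  | zero => exact hp0ne x₁ hpx₁
  | succ m =>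
  have hpx₂' : (p (m+2)).eval x₂ = 0 := hpx₂
  set Uq := ∑ k ∈ range (m+1), (p k).eval x₁ * (p k).eval x₁ with hUqd
  set Vq := ∑ k ∈ range (m+2), (p k).eval x₂ * (p k).eval x₂ with hVqd
  set tq := ∑ k ∈ range (m+1), (p k).eval x₁ * (p k).eval x₂ with htqd
  set rr := a (m+1) * (p m).eval x₁ with hrrd
  set P := (p (m+1)).eval x₂ with hPd
  set ss := a (m+2) * P with hssd
  -- dot products
  have hAA : ∑ k ∈ range (m+3), vecA p (m+1) x₁ k * vecA p (m+1) x₁ k = Uq := by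
    rw [vecA_mul_vecA p x₁ x₁ (m+1) (m+1) (m+3) (by omega) (le_refl _)]
  have hBB : ∑ k ∈ range (m+3), vecA p (m+2) x₂ k * vecA p (m+2) x₂ k = Vq := by
    rw [vecA_mul_vecA p x₂ x₂ (m+2) (m+2) (m+3) (by omega) (le_refl _)]
  have hABt : ∑ k ∈ range (m+3), vecA p (m+1) x₁ k * vecA p (m+2) x₂ k = tq := by
    rw [vecA_mul_vecA p x₁ x₂ (m+1) (m+2) (m+3) (by omega) (by omega)]
  have hAeN : ∑ k ∈ range (m+3), vecA p (m+1) x₁ k * vecE (m+1) k = 0 := by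
    rw [sum_mul_vecE _ (by omega : m+1 < m+3)]
    exact vecA_ge p (m+1) x₁ (lt_irrefl _)
  have hAeM : ∑ k ∈ range (m+3), vecA p (m+1) x₁ k * vecE (m+2) k = 0 := by
    rw [sum_mul_vecE _ (by omega : m+2 < m+3)]
    exact vecA_ge p (m+1) x₁ (by omega)
  have hBeN : ∑ k ∈ range (m+3), vecA p (m+2) x₂ k * vecE (m+1) k = P := by
    rw [sum_mul_vecE _ (by omega : m+1 < m+3), vecA_lt p (m+2) x₂ (by omega)]
  have hBeM : ∑ k ∈ range (m+3), vecA p (m+2) x₂ k * vecE (m+2) k = 0 := by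
    rw [sum_mul_vecE _ (by omega : m+2 < m+3)]
    exact vecA_ge p (m+2) x₂ (lt_irrefl _)
  have hNN : ∑ k ∈ range (m+3), vecE (m+1) k * vecE (m+1) k = 1 := by
    rw [sum_mul_vecE _ (by omega : m+1 < m+3)]; simp [vecE]
  have hMM : ∑ k ∈ range (m+3), vecE (m+2) k * vecE (m+2) k = 1 := by
    rw [sum_mul_vecE _ (by omega : m+2 < m+3)]; simp [vecE]
  have hNM : ∑ k ∈ range (m+3), vecE (m+1) k * vecE (m+2) k = 0 := by
    rw [sum_mul_vecE _ (by omega : m+2 < m+3)]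
    simp only [vecE, if_neg (by omega : ¬ m+2 = m+1)]
  have hNB : ∑ k ∈ range (m+3), vecE (m+1) k * vecA p (m+2) x₂ k = P := by
    rw [sum_swap_mul]; exact hBeN
  -- eval sums
  have heNs : ∀ x : ℝ, ∑ k ∈ range (m+3), vecE (m+1) k * (p k).eval x = (p (m+1)).eval x :=
    fun x => vecE_mul_sum _ (by omega)
  have heMs : ∀ x : ℝ, ∑ k ∈ range (m+3), vecE (m+2) k * (p k).eval x = (p (m+2)).eval x :=
    fun x => vecE_mul_sum _ (by omega)
  -- pointwise Christoffel-Darboux identities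
  have hptA : ∀ x : ℝ, (x - x₀) * (∑ k ∈ range (m+3), vecA p (m+1) x₁ k * (p k).eval x)
      = (x₁ - x₀) * (∑ k ∈ range (m+3), vecA p (m+1) x₁ k * (p k).eval x)
        + rr * (p (m+1)).eval x := by
    intro x
    rw [vecA_mul_sum p x₁ (m+1) (m+3) (by omega), hrrd]
    have hcd := cd_formula p a b hrec m x x₁
    linear_combination hcd - (a (m+1) * (p m).eval x) * hpx₁
  have hptB : ∀ x : ℝ, (x - x₀) * (∑ k ∈ range (m+3), vecA p (m+2) x₂ k * (p k).eval x)
      = (x₂ - x₀) * (∑ k ∈ range (m+3), vecA p (m+2) x₂ k * (p k).eval x)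
        + ss * (p (m+2)).eval x := by
    intro x
    rw [vecA_mul_sum p x₂ (m+2) (m+3) (by omega), hssd, hPd]
    have hcd := cd_formula p a b hrec (m+1) x x₂
    linear_combination hcd - (a (m+2) * (p (m+1)).eval x) * hpx₂'
  -- r·P = (ε₂ - ε₁)·t
  have hI1 : ∫ x, (∑ k ∈ range (m+3),
        ((x₁ - x₀) * vecA p (m+1) x₁ k + rr * vecE (m+1) k) * (p k).eval x)
      * (∑ l ∈ range (m+3), vecA p (m+2) x₂ l * (p l).eval x) ∂μ
      = (x₁ - x₀) * tq + rr * P := by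
    simp only [master μ p hPInt horth]
    rw [sum_combo2 (m+3) (x₁ - x₀) rr (vecA p (m+1) x₁) (vecE (m+1)) (vecA p (m+2) x₂),
      hABt, hNB]
  have hI2 : ∫ x, (∑ k ∈ range (m+3), vecA p (m+1) x₁ k * (p k).eval x)
      * (∑ l ∈ range (m+3),
        ((x₂ - x₀) * vecA p (m+2) x₂ l + ss * vecE (m+2) l) * (p l).eval x) ∂μ
      = (x₂ - x₀) * tq := by
    simp only [master μ p hPInt horth]
    rw [sum_combo2R (m+3) (x₂ - x₀) ss (vecA p (m+2) x₂) (vecE (m+2)) (vecA p (m+1) x₁),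
      hABt, hAeM]
    ring
  have hIeq : (x₁ - x₀) * tq + rr * P = (x₂ - x₀) * tq := by
    rw [← hI1, ← hI2]
    refine integral_congr_ae (Filter.Eventually.of_forall fun x => ?_)
    dsimp only
    have hsA : ∑ k ∈ range (m+3),
          ((x₁ - x₀) * vecA p (m+1) x₁ k + rr * vecE (m+1) k) * (p k).eval x
        = (x - x₀) * (∑ k ∈ range (m+3), vecA p (m+1) x₁ k * (p k).eval x) := by
      rw [sum_combo2 (m+3) (x₁ - x₀) rr (vecA p (m+1) x₁) (vecE (m+1))
        (fun k => (p k).eval x), heNs x, ← hptA x]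
    have hsB : ∑ l ∈ range (m+3),
          ((x₂ - x₀) * vecA p (m+2) x₂ l + ss * vecE (m+2) l) * (p l).eval x
        = (x - x₀) * (∑ l ∈ range (m+3), vecA p (m+2) x₂ l * (p l).eval x) := by
      rw [sum_combo2 (m+3) (x₂ - x₀) ss (vecA p (m+2) x₂) (vecE (m+2))
        (fun k => (p k).eval x), heMs x, ← hptB x]
    rw [hsA, hsB]
    ring
  have hrPt : rr * P = ((x₂ - x₀) - (x₁ - x₀)) * tq := by linarith [hIeq]
  -- Cauchy-Schwarz
  have hCS : tq ^ 2 ≤ Uq * Vq - Uq * P ^ 2 := by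
    have hγ : ∀ γ : ℝ, 0 ≤ (Vq - P ^ 2) * (γ * γ) + (-(2 * tq)) * γ + Uq := by
      intro γ
      have hnn : 0 ≤ ∫ x, (∑ k ∈ range (m+3),
            ((-γ) * vecA p (m+2) x₂ k + (γ * P) * vecE (m+1) k + 1 * vecA p (m+1) x₁ k
              + 0 * vecE (m+2) k) * (p k).eval x)
          * (∑ l ∈ range (m+3),
            ((-γ) * vecA p (m+2) x₂ l + (γ * P) * vecE (m+1) l + 1 * vecA p (m+1) x₁ l
              + 0 * vecE (m+2) l) * (p l).eval x) ∂μ :=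
        integral_nonneg fun x => mul_self_nonneg _
      simp only [master μ p hPInt horth] at hnn
      rw [sum_sq_combo4 (m+3) (-γ) (γ * P) 1 0 (vecA p (m+2) x₂) (vecE (m+1))
        (vecA p (m+1) x₁) (vecE (m+2))] at hnn
      rw [hBB, hNN, hAA, hMM, hBeN] at hnn
      rw [show ∑ k ∈ range (m+3), vecA p (m+2) x₂ k * vecA p (m+1) x₁ k = tq from
        (sum_swap_mul _ _ _).trans hABt] at hnn
      rw [show ∑ k ∈ range (m+3), vecE (m+1) k * vecA p (m+1) x₁ k = 0 from
        (sum_swap_mul _ _ _).trans hAeN] at hnn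
      rw [hNM] at hnn
      rw [show ∑ k ∈ range (m+3), vecA p (m+1) x₁ k * vecE (m+2) k = 0 from hAeM] at hnn
      rw [hBeM] at hnn
      linarith [hnn]
    have hD := discrim_le_zero hγ
    rw [discrim] at hD
    linarith [hD]
  -- the quadratic form inequality
  have hquad : ∀ α β : ℝ, d ^ 2 * (α ^ 2 * Uq + 2 * α * β * tq + β ^ 2 * Vq)
      ≤ α ^ 2 * ((x₁ - x₀) ^ 2 * Uq + rr ^ 2) + β ^ 2 * ((x₂ - x₀) ^ 2 * Vq + ss ^ 2)
        + 2 * α * β * ((x₁ - x₀) * (x₂ - x₀) * tq + (x₂ - x₀) * (rr * P)) := by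
    intro α β
    have hInt1 := masterInt μ p hPInt (m+3)
      (fun k => α * vecA p (m+1) x₁ k + β * vecA p (m+2) x₂ k + 0 * vecE (m+1) k
        + 0 * vecE (m+2) k)
      (fun k => α * vecA p (m+1) x₁ k + β * vecA p (m+2) x₂ k + 0 * vecE (m+1) k
        + 0 * vecE (m+2) k)
    have hInt2 := masterInt μ p hPInt (m+3)
      (fun k => (α * (x₁ - x₀)) * vecA p (m+1) x₁ k + (β * (x₂ - x₀)) * vecA p (m+2) x₂ k
        + (α * rr) * vecE (m+1) k + (β * ss) * vecE (m+2) k)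
      (fun k => (α * (x₁ - x₀)) * vecA p (m+1) x₁ k + (β * (x₂ - x₀)) * vecA p (m+2) x₂ k
        + (α * rr) * vecE (m+1) k + (β * ss) * vecE (m+2) k)
    have hle : ∫ x, d ^ 2 * ((∑ k ∈ range (m+3),
          (α * vecA p (m+1) x₁ k + β * vecA p (m+2) x₂ k + 0 * vecE (m+1) k
            + 0 * vecE (m+2) k) * (p k).eval x)
        * (∑ l ∈ range (m+3),
          (α * vecA p (m+1) x₁ l + β * vecA p (m+2) x₂ l + 0 * vecE (m+1) l
            + 0 * vecE (m+2) l) * (p l).eval x)) ∂μ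
        ≤ ∫ x, (∑ k ∈ range (m+3),
          ((α * (x₁ - x₀)) * vecA p (m+1) x₁ k + (β * (x₂ - x₀)) * vecA p (m+2) x₂ k
            + (α * rr) * vecE (m+1) k + (β * ss) * vecE (m+2) k) * (p k).eval x)
        * (∑ l ∈ range (m+3),
          ((α * (x₁ - x₀)) * vecA p (m+1) x₁ l + (β * (x₂ - x₀)) * vecA p (m+2) x₂ l
            + (α * rr) * vecE (m+1) l + (β * ss) * vecE (m+2) l) * (p l).eval x) ∂μ := by
      refine integral_mono_ae (hInt1.const_mul _) hInt2 ?_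
      filter_upwards [haeD] with x hx
      have hFGx : ∑ k ∈ range (m+3),
            ((α * (x₁ - x₀)) * vecA p (m+1) x₁ k + (β * (x₂ - x₀)) * vecA p (m+2) x₂ k
              + (α * rr) * vecE (m+1) k + (β * ss) * vecE (m+2) k) * (p k).eval x
          = (x - x₀) * (∑ k ∈ range (m+3),
            (α * vecA p (m+1) x₁ k + β * vecA p (m+2) x₂ k + 0 * vecE (m+1) k
              + 0 * vecE (m+2) k) * (p k).eval x) := by
        rw [sum_combo4 (m+3) (α * (x₁ - x₀)) (β * (x₂ - x₀)) (α * rr) (β * ss)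
          (vecA p (m+1) x₁) (vecA p (m+2) x₂) (vecE (m+1)) (vecE (m+2))
          (fun k => (p k).eval x)]
        rw [sum_combo4 (m+3) α β 0 0
          (vecA p (m+1) x₁) (vecA p (m+2) x₂) (vecE (m+1)) (vecE (m+2))
          (fun k => (p k).eval x)]
        rw [heNs x, heMs x]
        linear_combination (-α) * hptA x + (-β) * hptB x
      rw [hFGx]
      have hmul := mul_le_mul_of_nonneg_right hx (mul_self_nonneg
        (∑ k ∈ range (m+3),
          (α * vecA p (m+1) x₁ k + β * vecA p (m+2) x₂ k + 0 * vecE (m+1) k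
            + 0 * vecE (m+2) k) * (p k).eval x))
      linarith [hmul]
    rw [integral_const_mul] at hle
    simp only [master μ p hPInt horth] at hle
    rw [sum_sq_combo4 (m+3) α β 0 0 (vecA p (m+1) x₁) (vecA p (m+2) x₂) (vecE (m+1))
      (vecE (m+2))] at hle
    rw [sum_sq_combo4 (m+3) (α * (x₁ - x₀)) (β * (x₂ - x₀)) (α * rr) (β * ss)
      (vecA p (m+1) x₁) (vecA p (m+2) x₂) (vecE (m+1)) (vecE (m+2))] at hle
    rw [hAA, hBB, hNN, hMM, hABt, hAeN, hAeM, hBeN, hBeM, hNM] at hle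
    linarith [hle]
  -- remaining scalar facts
  have hUpos : 0 < Uq := by
    rw [hUqd]
    have h2 := Finset.single_le_sum
      (fun (k : ℕ) (_ : k ∈ range (m+1)) => mul_self_nonneg ((p k).eval x₁))
      (Finset.mem_range.2 (Nat.succ_pos m))
    have h3 : 0 < (p 0).eval x₁ * (p 0).eval x₁ := mul_self_pos.2 (hp0ne x₁)
    linarith
  have hUm' : (p m).eval x₁ * (p m).eval x₁ ≤ Uq := by
    rw [hUqd]
    exact Finset.single_le_sum
      (fun (k : ℕ) (_ : k ∈ range (m+1)) => mul_self_nonneg ((p k).eval x₁))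
      (Finset.mem_range.2 (by omega))
  have hUm : rr ^ 2 ≤ aInf ^ 2 * Uq := by
    have h3 : a (m+1) ^ 2 ≤ aInf ^ 2 := by
      linarith [mul_self_le_mul_self (ha (m+1)).le (haInf_ge (m+1)), sq_nonneg (a (m+1))]
    have h4 := mul_le_mul_of_nonneg_right h3 (mul_self_nonneg ((p m).eval x₁))
    have h5 := mul_le_mul_of_nonneg_left hUm' (sq_nonneg aInf)
    rw [hrrd]
    linarith [h4, h5]
  have hs2 : ss ^ 2 ≤ aInf ^ 2 * P ^ 2 := by
    have h3 : a (m+2) ^ 2 ≤ aInf ^ 2 := by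
      linarith [mul_self_le_mul_self (ha (m+2)).le (haInf_ge (m+2)), sq_nonneg (a (m+2))]
    have h4 := mul_le_mul_of_nonneg_right h3 (sq_nonneg P)
    rw [hssd]
    linarith [h4]
  have hrne : rr ≠ 0 := by
    rw [hrrd]
    intro hcon
    rcases mul_eq_zero.1 hcon with h | h
    · exact (ha (m+1)).ne' h
    · exact hnoshare m x₁ h hpx₁
  have hPne : P ≠ 0 := by
    rw [hPd]
    intro hcon
    exact hnoshare (m+1) x₂ hcon hpx₂'
  have hε₁ : (x₁ - x₀) ^ 2 < δ ^ 2 := sq_lt_sq' (by linarith) (by linarith)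
  have hε₂ : (x₂ - x₀) ^ 2 < δ ^ 2 := sq_lt_sq' (by linarith) (by linarith)
  exact final_algebra d δ aInf Uq Vq tq rr P ss (x₁ - x₀) (x₂ - x₀) hdpos hδpos hδd
    haInfpos hε₁ hε₂ hUpos hUm hs2 hrne hPne hrPt hCS hquad
end

section
/- Let dμ be a measure on ℝ with compact infinite support, and let x₀ be an isolated point of supp(dμ). Then there exists d₀ > 0 such that, setting δ_n = d₀²/(d₀ + √2·a_{n+1}), for every n at least one of the orthonormal polynomials p_n, p_{n+1} has at most one zero in (x₀ − δ_n, x₀ + δ_n). -/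
open MeasureTheory Polynomial

lemma aux_integrable_poly (μ : Measure ℝ)
    (hmom : ∀ n : ℕ, Integrable (fun x : ℝ => |x| ^ n) μ)
    (P : Polynomial ℝ) : Integrable (fun x => P.eval x) μ := by
  have h : (fun x : ℝ => P.eval x) =
      fun x => ∑ i ∈ Finset.range (P.natDegree + 1), P.coeff i * x ^ i := by
    funext x; exact P.eval_eq_sum_range x
  rw [h]
  refine integrable_finset_sum _ fun i _ => ?_
  have hx : Integrable (fun x : ℝ => x ^ i) μ := by
    refine (hmom i).mono ((continuous_pow i).aestronglyMeasurable) ?_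
    filter_upwards with x
    simp [Real.norm_eq_abs, abs_pow]
  exact hx.const_mul _

lemma aux_null (μ : Measure ℝ) : μ (measSupport μ)ᶜ = 0 := by
  refine measure_null_of_locally_null _ fun x hx => ?_
  simp only [measSupport, Set.mem_compl_iff, Set.mem_setOf_eq, not_forall] at hx
  push_neg at hx
  obtain ⟨ε, hε, hεz⟩ := hx
  refine ⟨Metric.ball x ε, ?_, ?_⟩
  · exact mem_nhdsWithin_of_mem_nhds (Metric.ball_mem_nhds x hε)
  · simpa using hεz

lemma aux_cd (p : ℕ → Polynomial ℝ) (a b : ℕ → ℝ)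
    (hrec : ∀ k x, x * (p k).eval x
      = a (k + 1) * (p (k + 1)).eval x + b (k + 1) * (p k).eval x
        + (if k = 0 then 0 else a k * (p (k - 1)).eval x)) :
    ∀ n (x y : ℝ), (x - y) * (∑ k ∈ Finset.range (n+1), (p k).eval x * (p k).eval y)
      = a (n+1) * ((p (n+1)).eval x * (p n).eval y - (p n).eval x * (p (n+1)).eval y) := by
  intro n
  induction n with
  | zero =>
    intro x y
    have hx := hrec 0 x; have hy := hrec 0 y
    rw [if_pos rfl] at hx hy
    simp only [zero_add, Finset.sum_range_one]
    linear_combination (p 0).eval y * hx - (p 0).eval x * hy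
  | succ n ih =>
    intro x y
    have hx := hrec (n+1) x; have hy := hrec (n+1) y
    rw [if_neg (Nat.succ_ne_zero n)] at hx hy
    try simp only [Nat.add_sub_cancel] at hx hy
    rw [Finset.sum_range_succ]
    linear_combination ih x y + (p (n+1)).eval y * hx - (p (n+1)).eval x * hy

lemma aux_nocommon (p : ℕ → Polynomial ℝ) (a b : ℕ → ℝ) (ha : ∀ k, 0 < a k)
    (hdeg0 : (p 0).natDegree = 0) (hlead0 : 0 < (p 0).leadingCoeff)
    (hrec : ∀ k x, x * (p k).eval x
      = a (k + 1) * (p (k + 1)).eval x + b (k + 1) * (p k).eval x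
        + (if k = 0 then 0 else a k * (p (k - 1)).eval x)) :
    ∀ k (x : ℝ), (p k).eval x = 0 → (p (k+1)).eval x = 0 → False := by
  intro k
  induction k with
  | zero =>
    intro x h0 _
    have h1 : (p 0).eval x = (p 0).coeff 0 := by
      rw [Polynomial.eval_eq_sum_range, hdeg0]; simp
    have h2 : (p 0).coeff 0 = (p 0).leadingCoeff := by
      rw [← Polynomial.coeff_natDegree, hdeg0]
    rw [h1, h2] at h0
    exact absurd h0 (ne_of_gt hlead0)
  | succ k ih =>
    intro x h1 h2
    have hx := hrec (k+1) x
    rw [if_neg (Nat.succ_ne_zero k)] at hx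
    try simp only [Nat.add_sub_cancel] at hx
    rw [h1, h2] at hx
    have h3 : a (k+1) * (p k).eval x = 0 := by linarith
    rcases mul_eq_zero.1 h3 with h | h
    · exact absurd h (ne_of_gt (ha (k+1)))
    · exact ih x h h1


lemma aux_bilin (μ : Measure ℝ) (p : ℕ → Polynomial ℝ)
    (hint : ∀ P : Polynomial ℝ, Integrable (fun x => P.eval x) μ)
    (horth : ∀ k m, ∫ x, (p k).eval x * (p m).eval x ∂μ = if k = m then 1 else 0)
    (N : ℕ) (c d : ℕ → ℝ) :
    Integrable (fun t => (∑ k ∈ Finset.range N, c k * (p k).eval t) *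
        (∑ k ∈ Finset.range N, d k * (p k).eval t)) μ ∧
      ∫ t, (∑ k ∈ Finset.range N, c k * (p k).eval t) *
        (∑ k ∈ Finset.range N, d k * (p k).eval t) ∂μ = ∑ k ∈ Finset.range N, c k * d k := by
  have hfun : (fun t => (∑ k ∈ Finset.range N, c k * (p k).eval t) *
      (∑ k ∈ Finset.range N, d k * (p k).eval t)) =
      fun t => ∑ k ∈ Finset.range N, ∑ m ∈ Finset.range N,
        (c k * d m) * ((p k) * (p m)).eval t := by
    funext t
    rw [Finset.sum_mul_sum]
    refine Finset.sum_congr rfl fun k _ => Finset.sum_congr rfl fun m _ => ?_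
    simp only [eval_mul]; ring
  have hI : ∀ k m : ℕ, Integrable (fun t => (c k * d m) * ((p k) * (p m)).eval t) μ :=
    fun k m => (hint _).const_mul _
  constructor
  · rw [hfun]
    exact integrable_finset_sum _ fun k _ => integrable_finset_sum _ fun m _ => hI k m
  · rw [hfun, integral_finset_sum _ (fun k _ => integrable_finset_sum _ fun m _ => hI k m)]
    refine Finset.sum_congr rfl fun k hk => ?_
    rw [integral_finset_sum _ fun m _ => hI k m]
    have h1 : ∀ m ∈ Finset.range N, ∫ t, (c k * d m) * ((p k) * (p m)).eval t ∂μ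
        = if k = m then c k * d m else 0 := by
      intro m _
      rw [MeasureTheory.integral_const_mul]
      have h2 : ∫ t, ((p k) * (p m)).eval t ∂μ = if k = m then 1 else 0 := by
        simpa only [eval_mul] using horth k m
      rw [h2]
      by_cases h : k = m <;> simp [h]
    rw [Finset.sum_congr rfl h1, Finset.sum_ite_eq]
    simp [hk]

set_option maxHeartbeats 1000000 in
lemma aux_main_step (μ : Measure ℝ) (p : ℕ → Polynomial ℝ)
    (hint : ∀ P : Polynomial ℝ, Integrable (fun x => P.eval x) μ)
    (horth : ∀ k m, ∫ x, (p k).eval x * (p m).eval x ∂μ = if k = m then 1 else 0)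
    (hnull : μ (measSupport μ)ᶜ = 0)
    (x₀ G δ : ℝ) (hG : 0 ≤ G)
    (hgap : ∀ t ∈ measSupport μ, t ≠ x₀ → G ≤ |t - x₀|)
    (N : ℕ) (c₁ c₂ e : ℕ → ℝ) (z₁ z₂ ρ₁ ρ₂ : ℝ)
    (hz₁ : |z₁ - x₀| ≤ δ) (hz₂ : |z₂ - x₀| ≤ δ)
    (h12 : ∑ k ∈ Finset.range N, c₁ k * c₂ k = 0)
    (hee : ∑ k ∈ Finset.range N, e k * e k = 1)
    (h1e : ∑ k ∈ Finset.range N, c₁ k * e k = 0)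
    (h2e : ∑ k ∈ Finset.range N, c₂ k * e k = 0)
    (hS₁ : 0 < ∑ k ∈ Finset.range N, c₁ k * c₁ k)
    (hS₂ : 0 < ∑ k ∈ Finset.range N, c₂ k * c₂ k)
    (hpt₁ : ∀ t : ℝ, (t - x₀) * (∑ k ∈ Finset.range N, c₁ k * (p k).eval t)
      = (z₁ - x₀) * (∑ k ∈ Finset.range N, c₁ k * (p k).eval t)
        + ρ₁ * (∑ k ∈ Finset.range N, e k * (p k).eval t))
    (hpt₂ : ∀ t : ℝ, (t - x₀) * (∑ k ∈ Finset.range N, c₂ k * (p k).eval t)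
      = (z₂ - x₀) * (∑ k ∈ Finset.range N, c₂ k * (p k).eval t)
        + ρ₂ * (∑ k ∈ Finset.range N, e k * (p k).eval t)) :
    (G^2 - δ^2)/2 * (∑ k ∈ Finset.range N, c₁ k * c₁ k) ≤ ρ₁^2 ∨
    (G^2 - δ^2)/2 * (∑ k ∈ Finset.range N, c₂ k * c₂ k) ≤ ρ₂^2 := by
  by_contra hcon
  push_neg at hcon
  obtain ⟨hc₁, hc₂⟩ := hcon
  -- choose A B
  obtain ⟨A, B, hABne, hAB⟩ :
      ∃ A B : ℝ, ¬(A = 0 ∧ B = 0) ∧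
        A * (∑ k ∈ Finset.range N, c₁ k * (p k).eval x₀)
          + B * (∑ k ∈ Finset.range N, c₂ k * (p k).eval x₀) = 0 := by
    by_cases h : (∑ k ∈ Finset.range N, c₂ k * (p k).eval x₀) = 0
    · exact ⟨0, 1, by simp, by simp [h]⟩
    · refine ⟨1, -(∑ k ∈ Finset.range N, c₁ k * (p k).eval x₀) /
        (∑ k ∈ Finset.range N, c₂ k * (p k).eval x₀), by simp, ?_⟩
      field_simp
      ring
  set cu : ℕ → ℝ := fun k => A * c₁ k + B * c₂ k with hcu
  set γ : ℝ := A * ρ₁ + B * ρ₂ with hγ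
  set cv : ℕ → ℝ := fun k => A * (z₁ - x₀) * c₁ k + B * (z₂ - x₀) * c₂ k + γ * e k with hcv
  have hu : ∀ t : ℝ, (∑ k ∈ Finset.range N, cu k * (p k).eval t)
      = A * (∑ k ∈ Finset.range N, c₁ k * (p k).eval t)
        + B * (∑ k ∈ Finset.range N, c₂ k * (p k).eval t) := by
    intro t
    simp only [hcu, add_mul, Finset.sum_add_distrib, mul_assoc, ← Finset.mul_sum]
  have hw : ∀ t : ℝ, (∑ k ∈ Finset.range N, cv k * (p k).eval t)
      = A * (z₁ - x₀) * (∑ k ∈ Finset.range N, c₁ k * (p k).eval t)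
        + B * (z₂ - x₀) * (∑ k ∈ Finset.range N, c₂ k * (p k).eval t)
        + γ * (∑ k ∈ Finset.range N, e k * (p k).eval t) := by
    intro t
    simp only [hcv, add_mul, Finset.sum_add_distrib, mul_assoc, ← Finset.mul_sum]
  have hv : ∀ t : ℝ, (t - x₀) * (∑ k ∈ Finset.range N, cu k * (p k).eval t)
      = ∑ k ∈ Finset.range N, cv k * (p k).eval t := by
    intro t
    rw [hu t, hw t]
    linear_combination A * hpt₁ t + B * hpt₂ t
  -- sums of coefficient products
  have hScu : ∑ k ∈ Finset.range N, cu k * cu k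
      = A^2 * (∑ k ∈ Finset.range N, c₁ k * c₁ k)
        + B^2 * (∑ k ∈ Finset.range N, c₂ k * c₂ k) := by
    have h : ∀ k, cu k * cu k = A^2 * (c₁ k * c₁ k) + B^2 * (c₂ k * c₂ k)
        + (2*A*B) * (c₁ k * c₂ k) := by
      intro k; simp only [hcu]; ring
    simp only [h, Finset.sum_add_distrib, ← Finset.mul_sum, h12]
    ring
  have hScv : ∑ k ∈ Finset.range N, cv k * cv k
      = (A * (z₁ - x₀))^2 * (∑ k ∈ Finset.range N, c₁ k * c₁ k)
        + (B * (z₂ - x₀))^2 * (∑ k ∈ Finset.range N, c₂ k * c₂ k) + γ^2 := by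
    have h : ∀ k, cv k * cv k = (A*(z₁-x₀))^2 * (c₁ k * c₁ k)
        + (B*(z₂-x₀))^2 * (c₂ k * c₂ k) + γ^2 * (e k * e k)
        + (2*(A*(z₁-x₀))*(B*(z₂-x₀))) * (c₁ k * c₂ k)
        + (2*(A*(z₁-x₀))*γ) * (c₁ k * e k)
        + (2*(B*(z₂-x₀))*γ) * (c₂ k * e k) := by
      intro k; simp only [hcv]; ring
    simp only [h, Finset.sum_add_distrib, ← Finset.mul_sum, h12, hee, h1e, h2e]
    ring
  -- integral inequality
  have bilu := aux_bilin μ p hint horth N cu cu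
  have bilv := aux_bilin μ p hint horth N cv cv
  have hmono : G^2 * (∑ k ∈ Finset.range N, cu k * cu k)
      ≤ ∑ k ∈ Finset.range N, cv k * cv k := by
    have hle : ∫ t, G^2 * ((∑ k ∈ Finset.range N, cu k * (p k).eval t) *
          (∑ k ∈ Finset.range N, cu k * (p k).eval t)) ∂μ
        ≤ ∫ t, (∑ k ∈ Finset.range N, cv k * (p k).eval t) *
          (∑ k ∈ Finset.range N, cv k * (p k).eval t) ∂μ := by
      refine integral_mono_ae (bilu.1.const_mul _) bilv.1 ?_
      have hsupp : ∀ᵐ t ∂μ, t ∈ measSupport μ := by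
        rw [ae_iff]
        exact hnull
      filter_upwards [hsupp] with t htm
      rw [← hv t]
      set U := (∑ k ∈ Finset.range N, cu k * (p k).eval t) with hU
      rcases eq_or_ne t x₀ with h | h
      · have hu0 : U = 0 := by rw [hU, h, hu x₀]; exact hAB
        rw [hu0]; simp
      · have hgt := hgap t htm h
        have h2 : G^2 ≤ (t - x₀)^2 := by
          nlinarith [sq_abs (t - x₀), abs_nonneg (t - x₀)]
        nlinarith [mul_self_nonneg U, h2]
    rw [MeasureTheory.integral_const_mul, bilu.2, bilv.2] at hle
    exact hle
  -- chain of inequalities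
  have hz₁' : (z₁ - x₀)^2 ≤ δ^2 := by nlinarith [abs_nonneg (z₁ - x₀), sq_abs (z₁ - x₀)]
  have hz₂' : (z₂ - x₀)^2 ≤ δ^2 := by nlinarith [abs_nonneg (z₂ - x₀), sq_abs (z₂ - x₀)]
  have hkey : (G^2 - δ^2) * (A^2 * (∑ k ∈ Finset.range N, c₁ k * c₁ k)
      + B^2 * (∑ k ∈ Finset.range N, c₂ k * c₂ k)) ≤ γ^2 := by
    rw [hScu, hScv] at hmono
    nlinarith [mul_le_mul_of_nonneg_left hz₁' (mul_nonneg (sq_nonneg A) hS₁.le),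
      mul_le_mul_of_nonneg_left hz₂' (mul_nonneg (sq_nonneg B) hS₂.le)]
  have hγ2 : γ^2 ≤ 2*(A^2*ρ₁^2) + 2*(B^2*ρ₂^2) := by
    rw [hγ]; nlinarith [sq_nonneg (A*ρ₁ - B*ρ₂)]
  rcases not_and_or.1 hABne with hA | hB
  · have hA2 : 0 < A^2 := by positivity
    have k₁ := mul_lt_mul_of_pos_left hc₁ hA2
    have k₂ := mul_le_mul_of_nonneg_left hc₂.le (sq_nonneg B)
    nlinarith [hkey, k₁, k₂, hγ2]
  · have hB2 : 0 < B^2 := by positivity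
    have k₁ := mul_le_mul_of_nonneg_left hc₁.le (sq_nonneg A)
    have k₂ := mul_lt_mul_of_pos_left hc₂ hB2
    nlinarith [hkey, k₁, k₂, hγ2]


lemma aux_arith (ε δ aa Px Py Sx Sy K d : ℝ)
    (hε : 0 < ε) (haa : 0 < aa) (hδpos : 0 < δ) (hδlt : δ < ε/4)
    (hδaa : δ * aa ≤ (ε/4)^2)
    (hPx : Px ≠ 0) (hPy : Py ≠ 0)
    (hSx : 0 < Sx) (hSy : 0 < Sy)
    (hxcon : (ε^2 - δ^2)/2 * Sx ≤ aa^2 * Px^2)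
    (hycon : (ε^2 - δ^2)/2 * Sy ≤ aa^2 * Py^2)
    (hCS : K^2 ≤ Sx * Sy)
    (hCD : d * K = aa * (Px * Py))
    (hd2 : d^2 ≤ (2*δ)^2) : False := by
  have hδε : δ < ε := by linarith
  have hc2pos : 0 < (ε^2 - δ^2)/2 := by nlinarith
  have step1 : (aa * (Px * Py))^2 ≤ (2*δ)^2 * (Sx * Sy) := by
    rw [← hCD]
    nlinarith [mul_le_mul_of_nonneg_left hCS (sq_nonneg d),
      mul_le_mul_of_nonneg_right hd2 (mul_nonneg hSx.le hSy.le)]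
  have step2 : ((ε^2 - δ^2)/2)^2 * (Sx * Sy) ≤ (aa^2 * Px^2) * (aa^2 * Py^2) := by
    nlinarith [mul_le_mul hxcon hycon (mul_nonneg hc2pos.le hSy.le) (by positivity : (0:ℝ) ≤ aa^2 * Px^2)]
  have hT : 0 < aa^2 * Px^2 * Py^2 := by
    have h1 : 0 < Px^2 := by positivity
    have h2 : 0 < Py^2 := by positivity
    positivity
  have step3 : ((ε^2 - δ^2)/2)^2 ≤ (2*δ)^2 * aa^2 := by
    nlinarith [mul_le_mul_of_nonneg_left step1 (sq_nonneg ((ε^2 - δ^2)/2)),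
      mul_le_mul_of_nonneg_left step2 (by positivity : (0:ℝ) ≤ (2*δ)^2), hT,
      mul_pos hSx hSy]
  have hδsq : δ*δ ≤ (ε/4)*(ε/4) := mul_le_mul hδlt.le hδlt.le hδpos.le (by positivity)
  have hc2ge : 15*ε^2/32 ≤ (ε^2 - δ^2)/2 := by linarith [hδsq]
  have h1 : (15*ε^2/32)*(15*ε^2/32) ≤ ((ε^2 - δ^2)/2)*((ε^2 - δ^2)/2) :=
    mul_le_mul hc2ge hc2ge (by positivity) hc2pos.le
  have hsq' : (δ * aa)*(δ * aa) ≤ ((ε/4)^2)*((ε/4)^2) :=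
    mul_le_mul hδaa hδaa (mul_nonneg hδpos.le haa.le) (sq_nonneg _)
  have hε4 : 0 < ε^4 := by positivity
  linarith [h1, step3, hsq', hε4]

set_option maxHeartbeats 1000000 in
/-- Theorem 2: if `x₀` is an isolated point of `supp μ`, there is `d₀ > 0` so that
with `δ_n = d₀²/(d₀ + √2 a_{n+1})`, at least one of `p_n`, `p_{n+1}` has at most
one zero in `(x₀ − δ_n, x₀ + δ_n)`. -/
theorem stmt_12 (μ : Measure ℝ)
    (hmom : ∀ n : ℕ, Integrable (fun x : ℝ => |x| ^ n) μ)
    (hcpt : IsCompact (measSupport μ))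
    (hinf : (measSupport μ).Infinite)
    (p : ℕ → Polynomial ℝ) (a b : ℕ → ℝ)
    (ha : ∀ k, 0 < a k)
    (hdeg : ∀ k, (p k).natDegree = k)
    (hlead : ∀ k, 0 < (p k).leadingCoeff)
    (horth : ∀ k m, ∫ x, (p k).eval x * (p m).eval x ∂μ = if k = m then 1 else 0)
    (hrec : ∀ k x, x * (p k).eval x
      = a (k + 1) * (p (k + 1)).eval x + b (k + 1) * (p k).eval x
        + (if k = 0 then 0 else a k * (p (k - 1)).eval x))
    (x₀ : ℝ) (hx₀ : x₀ ∈ measSupport μ)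
    (hiso : ∃ ε > 0, measSupport μ ∩ Metric.ball x₀ ε = {x₀}) :
    ∃ d₀ > (0 : ℝ), ∀ n : ℕ,
      ∀ δ : ℝ, δ = d₀ ^ 2 / (d₀ + Real.sqrt 2 * a (n + 1)) →
      ({x ∈ Set.Ioo (x₀ - δ) (x₀ + δ) | (p n).eval x = 0}.Subsingleton ∨
       {x ∈ Set.Ioo (x₀ - δ) (x₀ + δ) | (p (n + 1)).eval x = 0}.Subsingleton) := by
  obtain ⟨ε, hε, hball⟩ := hiso
  have hint := aux_integrable_poly μ hmom
  have hnull := aux_null μ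
  have CD := aux_cd p a b hrec
  have hnc := aux_nocommon p a b ha (hdeg 0) (hlead 0) hrec
  have hgap : ∀ t ∈ measSupport μ, t ≠ x₀ → ε ≤ |t - x₀| := by
    intro t ht hne
    by_contra hcc
    push_neg at hcc
    have htb : t ∈ measSupport μ ∩ Metric.ball x₀ ε :=
      ⟨ht, by simpa [Metric.mem_ball, Real.dist_eq] using hcc⟩
    rw [hball] at htb
    exact hne htb
  refine ⟨ε/4, by positivity, ?_⟩
  intro n δ hδ
  have haa : 0 < a (n+1) := ha _
  have hsq2 : (1:ℝ) ≤ Real.sqrt 2 := by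
    nlinarith [Real.sq_sqrt (by norm_num : (0:ℝ) ≤ 2), Real.sqrt_nonneg 2]
  have hs2a : 0 < Real.sqrt 2 * a (n+1) := by nlinarith
  have hden : 0 < ε/4 + Real.sqrt 2 * a (n+1) := by nlinarith
  have hδpos : 0 < δ := by
    rw [hδ]
    exact div_pos (by positivity) hden
  have hδd : δ * (ε/4 + Real.sqrt 2 * a (n+1)) = (ε/4)^2 := by
    rw [hδ]; field_simp
  have hδlt : δ < ε/4 := by nlinarith [mul_pos hδpos hs2a]
  have hδaa : δ * a (n+1) ≤ (ε/4)^2 := by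
    nlinarith [mul_nonneg (mul_nonneg hδpos.le haa.le) (sub_nonneg.2 hsq2),
      mul_nonneg hδpos.le (by positivity : (0:ℝ) ≤ ε/4)]
  by_contra hcon
  push_neg at hcon
  obtain ⟨hA, hB⟩ := hcon
  obtain ⟨x₁, hx₁m, x₂, hx₂m, hx12⟩ := hA
  obtain ⟨y₁, hy₁m, y₂, hy₂m, hy12⟩ := hB
  obtain ⟨hx₁I, hx₁0⟩ := hx₁m
  obtain ⟨hx₂I, hx₂0⟩ := hx₂m
  obtain ⟨hy₁I, hy₁0⟩ := hy₁m
  obtain ⟨hy₂I, hy₂0⟩ := hy₂m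
  have habs : ∀ z : ℝ, z ∈ Set.Ioo (x₀ - δ) (x₀ + δ) → |z - x₀| ≤ δ := by
    intro z hz
    rw [Set.mem_Ioo] at hz
    rw [abs_le]; constructor <;> [linarith [hz.1]; linarith [hz.2]]
  have hax₁ := habs x₁ hx₁I
  have hax₂ := habs x₂ hx₂I
  have hay₁ := habs y₁ hy₁I
  have hay₂ := habs y₂ hy₂I
  -- kernel coefficients
  set c : ℝ → ℕ → ℝ := fun z k => if k = n + 1 then 0 else (p k).eval z with hcdef
  have hc_top : ∀ z, c z (n+1) = 0 := fun z => if_pos rfl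
  have hc_lo : ∀ z k, k < n + 1 → c z k = (p k).eval z := by
    intro z k hk
    exact if_neg (by omega)
  have F1 : ∀ z t : ℝ, (∑ k ∈ Finset.range (n+2), c z k * (p k).eval t)
      = ∑ k ∈ Finset.range (n+1), (p k).eval z * (p k).eval t := by
    intro z t
    rw [Finset.sum_range_succ, hc_top, zero_mul, add_zero]
    refine Finset.sum_congr rfl fun k hk => ?_
    rw [Finset.mem_range] at hk
    rw [hc_lo z k hk]
  have F2 : ∀ z w : ℝ, (∑ k ∈ Finset.range (n+2), c z k * c w k)
      = ∑ k ∈ Finset.range (n+1), (p k).eval z * (p k).eval w := by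
    intro z w
    rw [Finset.sum_range_succ, hc_top, zero_mul, add_zero]
    refine Finset.sum_congr rfl fun k hk => ?_
    rw [Finset.mem_range] at hk
    rw [hc_lo z k hk, hc_lo w k hk]
  have sum_ite : ∀ (m : ℕ) (f : ℕ → ℝ), m < n + 2 →
      (∑ k ∈ Finset.range (n+2), (if k = m then (1:ℝ) else 0) * f k) = f m := by
    intro m f hm
    simp only [ite_mul, one_mul, zero_mul]
    rw [Finset.sum_ite_eq' (Finset.range (n+2)) m f, if_pos (Finset.mem_range.2 hm)]
  have sum_ite' : ∀ (m : ℕ) (f : ℕ → ℝ), m < n + 2 →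
      (∑ k ∈ Finset.range (n+2), f k * (if k = m then (1:ℝ) else 0)) = f m := by
    intro m f hm
    simp only [mul_ite, mul_one, mul_zero]
    rw [Finset.sum_ite_eq' (Finset.range (n+2)) m f, if_pos (Finset.mem_range.2 hm)]
  have hp0 : ∀ z : ℝ, (p 0).eval z = (p 0).leadingCoeff := by
    intro z
    have h1 : (p 0).eval z = (p 0).coeff 0 := by
      rw [Polynomial.eval_eq_sum_range, hdeg 0]; simp
    rw [h1, ← Polynomial.coeff_natDegree, hdeg 0]
  have hSpos : ∀ z : ℝ, 0 < ∑ k ∈ Finset.range (n+2), c z k * c z k := by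
    intro z
    refine Finset.sum_pos' (fun k _ => mul_self_nonneg _) ⟨0, Finset.mem_range.2 (by omega), ?_⟩
    rw [hc_lo z 0 (by omega), hp0 z]
    exact mul_pos (hlead 0) (hlead 0)
  -- orthogonality of kernel vectors at two zeros
  have hker0 : ∀ z w : ℝ, z ≠ w → ((p n).eval z = 0 ∧ (p n).eval w = 0) ∨
      ((p (n+1)).eval z = 0 ∧ (p (n+1)).eval w = 0) →
      (∑ k ∈ Finset.range (n+2), c z k * c w k) = 0 := by
    intro z w hzw hcase
    rw [F2]
    have hcd := CD n z w
    have h0 : (z - w) * (∑ k ∈ Finset.range (n+1), (p k).eval z * (p k).eval w) = 0 := by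
      rcases hcase with ⟨h1, h2⟩ | ⟨h1, h2⟩
      · rw [hcd, h1, h2]; ring
      · rw [hcd, h1, h2]; ring
    exact (mul_eq_zero.1 h0).resolve_left (sub_ne_zero.2 hzw)
  -- Step A : zeros of p n
  have stepA := aux_main_step μ p hint horth hnull x₀ ε δ hε.le hgap (n+2)
    (c x₁) (c x₂) (fun k => if k = n then (1:ℝ) else 0) x₁ x₂
    (-(a (n+1) * (p (n+1)).eval x₁)) (-(a (n+1) * (p (n+1)).eval x₂))
    hax₁ hax₂
    (hker0 x₁ x₂ hx12 (Or.inl ⟨hx₁0, hx₂0⟩))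
    (by rw [sum_ite n _ (by omega)]; simp)
    (by rw [sum_ite' n _ (by omega), hc_lo x₁ n (by omega)]; exact hx₁0)
    (by rw [sum_ite' n _ (by omega), hc_lo x₂ n (by omega)]; exact hx₂0)
    (hSpos x₁) (hSpos x₂)
    (by
      intro t
      rw [F1 x₁ t, sum_ite n (fun k => (p k).eval t) (by omega)]
      have h := CD n x₁ t
      rw [hx₁0] at h
      linear_combination -h)
    (by
      intro t
      rw [F1 x₂ t, sum_ite n (fun k => (p k).eval t) (by omega)]
      have h := CD n x₂ t
      rw [hx₂0] at h
      linear_combination -h)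
  -- Step B : zeros of p (n+1)
  have stepB := aux_main_step μ p hint horth hnull x₀ ε δ hε.le hgap (n+2)
    (c y₁) (c y₂) (fun k => if k = n+1 then (1:ℝ) else 0) y₁ y₂
    (a (n+1) * (p n).eval y₁) (a (n+1) * (p n).eval y₂)
    hay₁ hay₂
    (hker0 y₁ y₂ hy12 (Or.inr ⟨hy₁0, hy₂0⟩))
    (by rw [sum_ite (n+1) _ (by omega)]; simp)
    (by rw [sum_ite' (n+1) _ (by omega), hc_top])
    (by rw [sum_ite' (n+1) _ (by omega), hc_top])
    (hSpos y₁) (hSpos y₂)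
    (by
      intro t
      rw [F1 y₁ t, sum_ite (n+1) (fun k => (p k).eval t) (by omega)]
      have h := CD n y₁ t
      rw [hy₁0] at h
      linear_combination -h)
    (by
      intro t
      rw [F1 y₂ t, sum_ite (n+1) (fun k => (p k).eval t) (by omega)]
      have h := CD n y₂ t
      rw [hy₂0] at h
      linear_combination -h)
  -- extract a zero x of p n with large residual
  obtain ⟨x, hax, hx0, hxcon⟩ : ∃ x : ℝ, |x - x₀| ≤ δ ∧ (p n).eval x = 0 ∧
      (ε^2 - δ^2)/2 * (∑ k ∈ Finset.range (n+2), c x k * c x k)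
        ≤ (a (n+1))^2 * ((p (n+1)).eval x)^2 := by
    rcases stepA with h | h
    · exact ⟨x₁, hax₁, hx₁0, by rw [neg_sq, mul_pow] at h; exact h⟩
    · exact ⟨x₂, hax₂, hx₂0, by rw [neg_sq, mul_pow] at h; exact h⟩
  obtain ⟨y, hay, hy0, hycon⟩ : ∃ y : ℝ, |y - x₀| ≤ δ ∧ (p (n+1)).eval y = 0 ∧
      (ε^2 - δ^2)/2 * (∑ k ∈ Finset.range (n+2), c y k * c y k)
        ≤ (a (n+1))^2 * ((p n).eval y)^2 := by
    rcases stepB with h | h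
    · exact ⟨y₁, hay₁, hy₁0, by rw [mul_pow] at h; exact h⟩
    · exact ⟨y₂, hay₂, hy₂0, by rw [mul_pow] at h; exact h⟩
  -- no common zero of consecutive polynomials
  have hP'x : (p (n+1)).eval x ≠ 0 := fun h => hnc n x hx0 h
  have hPy : (p n).eval y ≠ 0 := fun h => hnc n y h hy0
  -- Cauchy-Schwarz for the kernel vectors
  have hCS0 := Finset.sum_mul_sq_le_sq_mul_sq (Finset.range (n+2)) (c x) (c y)
  have hpow : ∀ z : ℝ, (∑ k ∈ Finset.range (n+2), (c z k)^2)
      = ∑ k ∈ Finset.range (n+2), c z k * c z k :=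
    fun z => Finset.sum_congr rfl fun k _ => by ring
  rw [hpow x, hpow y] at hCS0
  -- cross CD identity
  have hCD2 : (x - y) * (∑ k ∈ Finset.range (n+2), c x k * c y k)
      = a (n+1) * ((p (n+1)).eval x * (p n).eval y) := by
    rw [F2 x y]
    have h := CD n x y
    rw [hx0] at h
    linear_combination h
  have hxy1 : |x - y| ≤ 2*δ := by
    calc |x - y| ≤ |x - x₀| + |x₀ - y| := abs_sub_le x x₀ y
      _ ≤ δ + δ := add_le_add hax (by rwa [abs_sub_comm])
      _ = 2*δ := by ring
  have hxy2 : (x - y)^2 ≤ (2*δ)^2 := by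
    rw [← sq_abs (x - y)]
    exact pow_le_pow_left₀ (abs_nonneg _) hxy1 2
  exact aux_arith ε δ (a (n+1)) ((p (n+1)).eval x) ((p n).eval y)
    (∑ k ∈ Finset.range (n+2), c x k * c x k) (∑ k ∈ Finset.range (n+2), c y k * c y k)
    (∑ k ∈ Finset.range (n+2), c x k * c y k) (x - y)
    hε haa hδpos hδlt hδaa hP'x hPy (hSpos x) (hSpos y) hxcon hycon hCS0 hCD2 hxy2
end
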